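/- For d = 4 and the matrix M(k) = S(k) - S(k)ᵀ where S(k) is the scattering matrix with entries S_{i,j}(k) = ((1-η²)/(1-η⁴))·(-η·(1-η²)/(1-η²)·δ_{i,j} + (1-δ_{i,j})·η^{(j-i-1) mod 4}) with η = (1-k)/(1+k), the operator norm of M(k) equals 4k/(1+k²), and this attains its maximal value 2 at k = 1. -/

import Mathlib

set_option maxHeartbeats 1000000
set_option synthInstance.maxHeartbeats 400000

open Matrix

/-- The antisymmetric "circulant" matrix appearing in M(k) = S(k) - S(k)ᵀ for d = 4. -/
noncomputable def stmt5Jm : Matrix (Fin 4) (Fin 4) ℂ :=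
  !![0,1,0,-1; -1,0,1,0; 0,-1,0,1; 1,0,-1,0]

/-- The orthogonal projection matrix with stmt5Jmᴴ * stmt5Jm = 4 • stmt5Pm. -/
noncomputable def stmt5Pm : Matrix (Fin 4) (Fin 4) ℂ :=
  !![1/2,0,-1/2,0; 0,1/2,0,-1/2; -1/2,0,1/2,0; 0,-1/2,0,1/2]

/-- The operator norm of the matrix `stmt5Jm` is 2. -/
lemma stmt5_norm_Jm : ‖Matrix.toEuclideanCLM (𝕜 := ℂ) stmt5Jm‖ = 2 := by
  set φ := Matrix.toEuclideanCLM (𝕜 := ℂ) (n := Fin 4)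
  have hJJ : stmt5Jmᴴ * stmt5Jm = (4:ℂ) • stmt5Pm := by
    ext i j
    fin_cases i <;> fin_cases j <;>
      simp [stmt5Jm, stmt5Pm, Matrix.mul_apply, Fin.sum_univ_four, conjTranspose_apply] <;>
      norm_num
  have hPP : stmt5Pm * stmt5Pm = stmt5Pm := by
    ext i j
    fin_cases i <;> fin_cases j <;>
      simp [stmt5Pm, Matrix.mul_apply, Fin.sum_univ_four] <;> norm_num
  have hPstar : star stmt5Pm = stmt5Pm := by
    ext i j
    fin_cases i <;> fin_cases j <;>
      simp [stmt5Pm, star_eq_conjTranspose, conjTranspose_apply]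
  have hPne : stmt5Pm ≠ 0 := by
    intro h
    have := congrFun (congrFun h 0) 0
    simp [stmt5Pm] at this
  have hφP : ‖φ stmt5Pm‖ = 1 := by
    have h1 : star (φ stmt5Pm) * φ stmt5Pm = φ stmt5Pm := by
      rw [← map_star, hPstar, ← _root_.map_mul, hPP]
    have h2 := CStarRing.norm_star_mul_self (x := φ stmt5Pm)
    rw [h1] at h2
    have h3 : φ stmt5Pm ≠ 0 := by
      intro h; exact hPne (by simpa using congrArg φ.symm h)
    have h4 : ‖φ stmt5Pm‖ ≠ 0 := norm_ne_zero_iff.mpr h3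
    have h5 : ‖φ stmt5Pm‖ * 1 = ‖φ stmt5Pm‖ * ‖φ stmt5Pm‖ := by rw [mul_one, ← h2]
    exact (mul_left_cancel₀ h4 h5).symm
  have h5 : star (φ stmt5Jm) * φ stmt5Jm = (4:ℂ) • φ stmt5Pm := by
    rw [← map_star, ← _root_.map_mul, star_eq_conjTranspose, hJJ, _root_.map_smul]
  have h6 := CStarRing.norm_star_mul_self (x := φ stmt5Jm)
  rw [h5] at h6
  rw [norm_smul ((4:ℂ)) (φ stmt5Pm), hφP] at h6
  norm_num at h6
  nlinarith [norm_nonneg (φ stmt5Jm)]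

/-- The matrix identity S - Sᵀ = a • stmt5Jm. -/
lemma stmt5_matrix (η a : ℝ) (S : Matrix (Fin 4) (Fin 4) ℂ)
    (hS : ∀ i j : Fin 4, S i j =
      ((1 - (η : ℂ) ^ 2) / (1 - (η : ℂ) ^ 4)) *
        (-(η : ℂ) * ((1 - (η : ℂ) ^ 2) / (1 - (η : ℂ) ^ 2)) * (if i = j then 1 else 0) +
          (1 - (if i = j then 1 else 0)) * (η : ℂ) ^ ((j - i - 1 : Fin 4) : ℕ)))
    (hc : ((1 - (η:ℂ)^2)/(1 - (η:ℂ)^4)) * (1 - (η:ℂ)^2) = ((a:ℝ):ℂ)) :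
    S - Sᵀ = ((a:ℝ):ℂ) • stmt5Jm := by
  have key : ∀ i j : Fin 4, (S - Sᵀ) i j = ((a:ℝ):ℂ) • stmt5Jm i j := by
    intro i j
    rw [Matrix.sub_apply, transpose_apply, hS i j, hS j i]
    fin_cases i <;> fin_cases j <;>
      simp [stmt5Jm, show ((-1 - 1 : Fin 4) : ℕ) = 2 from rfl,
        show ((-2 - 1 : Fin 4) : ℕ) = 1 from rfl,
        show ((-3 - 1 : Fin 4) : ℕ) = 0 from rfl] <;>
      first
        | linear_combination hc
        | linear_combination -hc
  ext i j
  rw [Matrix.smul_apply]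
  exact key i j

/-- For d = 4, with η = (1-k)/(1+k) and S(k) the 4×4 preferred-orientation
scattering matrix, the operator norm of M(k) = S(k) - S(k)ᵀ equals 4k/(1+k²), which is
at most 2 for all k > 0 and attains the value 2 at k = 1. -/
theorem stmt_5 (k : ℝ) (hk : 0 < k) (η : ℝ) (hη : η = (1 - k) / (1 + k))
    (S : Matrix (Fin 4) (Fin 4) ℂ)
    (hS : ∀ i j : Fin 4, S i j =
      ((1 - (η : ℂ) ^ 2) / (1 - (η : ℂ) ^ 4)) *
        (-(η : ℂ) * ((1 - (η : ℂ) ^ 2) / (1 - (η : ℂ) ^ 2)) * (if i = j then 1 else 0) +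
          (1 - (if i = j then 1 else 0)) * (η : ℂ) ^ ((j - i - 1 : Fin 4) : ℕ))) :
    ‖Matrix.toEuclideanCLM (𝕜 := ℂ) (S - Sᵀ)‖ = 4 * k / (1 + k ^ 2) ∧
    4 * k / (1 + k ^ 2) ≤ 2 ∧
    (k = 1 → ‖Matrix.toEuclideanCLM (𝕜 := ℂ) (S - Sᵀ)‖ = 2) := by
  have h1' : (1:ℝ) + k ≠ 0 := by positivity
  have hkey : (1 - η^2)/(1 - η^4) * (1 - η^2) = 2*k/(1+k^2) := by
    have h2 : 1 - η^2 = 4*k/(1+k)^2 := by rw [hη]; field_simp; ring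
    have h4 : 1 - η^4 = 8*k*(1+k^2)/(1+k)^4 := by rw [hη]; field_simp; ring
    have hk2 : (1:ℝ) + k^2 ≠ 0 := by positivity
    rw [h2, h4]; field_simp; ring
  have hc : ((1 - (η:ℂ)^2)/(1 - (η:ℂ)^4)) * (1 - (η:ℂ)^2) = ((2*k/(1+k^2) : ℝ) : ℂ) := by
    rw [← hkey]; push_cast; ring
  have hM : S - Sᵀ = ((2*k/(1+k^2) : ℝ) : ℂ) • stmt5Jm :=
    stmt5_matrix η (2*k/(1+k^2)) S hS hc
  have ha : (0:ℝ) ≤ 2*k/(1+k^2) := by positivity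
  have hnorm : ‖Matrix.toEuclideanCLM (𝕜 := ℂ) (S - Sᵀ)‖ = 4 * k / (1 + k ^ 2) := by
    rw [hM, _root_.map_smul, norm_smul (((2*k/(1+k^2) : ℝ)):ℂ) (Matrix.toEuclideanCLM (𝕜 := ℂ) stmt5Jm), stmt5_norm_Jm]
    rw [Complex.norm_real, Real.norm_eq_abs, abs_of_nonneg ha]
    ring
  refine ⟨hnorm, ?_, ?_⟩
  · rw [div_le_iff₀ (by positivity)]
    nlinarith [sq_nonneg (k - 1)]
  · intro hk1
    rw [hnorm, hk1]
    norm_num
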